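/- Consider an evolving graph built by starting from the complete graph on 2μ vertices and at each step adding a new vertex connected to μ existing vertices, with uniform edge weight w = J/T. If T > Jμ then the only optimal set of φ(E') = c(E') + (J/T)|E'| is the empty set: for every subgraph S with n_s vertices and e_s internal edges one has n_s ≥ e_s·J/T + 1, and this inequality is preserved when adding a new vertex with μ_s ≤ μ edges into S, since μ_s·J/T ≤ μ·J/T < 1. -/

import Mathlib

open Finset
open scoped Classical

/-- Number of connected components of the subgraph with edge set `E'`,
including isolated vertices. -/
noncomputable def numComponents {V : Type*} [Fintype V] (E' : Finset (Sym2 V)) : ℕ :=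
  Nat.card (SimpleGraph.fromEdgeSet (E' : Set (Sym2 V))).ConnectedComponent

/-- Edge set of an evolving network: a complete graph on the first `2μ` vertices, and each
later vertex `v` attached by edges to the vertices in `nbr v`. -/
noncomputable def evolvingEdges (μ n : ℕ)
    (nbr : Fin (2 * μ + n) → Finset (Fin (2 * μ + n))) : Finset (Sym2 (Fin (2 * μ + n))) :=
  ((Finset.univ.filter
      (fun p : Fin (2 * μ + n) × Fin (2 * μ + n) => p.1.val < p.2.val ∧ p.2.val < 2 * μ)) ∪
    (Finset.univ.filter
      (fun p : Fin (2 * μ + n) × Fin (2 * μ + n) => p.1 ∈ nbr p.2 ∧ 2 * μ ≤ p.2.val))).image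
    (fun p => s(p.1, p.2))

noncomputable def myA (μ n : ℕ) (nbr : Fin (2 * μ + n) → Finset (Fin (2 * μ + n))) :
    Finset (Fin (2 * μ + n) × Fin (2 * μ + n)) :=
  (Finset.univ.filter
      (fun p : Fin (2 * μ + n) × Fin (2 * μ + n) => p.1.val < p.2.val ∧ p.2.val < 2 * μ)) ∪
    (Finset.univ.filter
      (fun p : Fin (2 * μ + n) × Fin (2 * μ + n) => p.1 ∈ nbr p.2 ∧ 2 * μ ≤ p.2.val))

noncomputable def evolvingEdges' (μ n : ℕ)
    (nbr : Fin (2 * μ + n) → Finset (Fin (2 * μ + n))) : Finset (Sym2 (Fin (2 * μ + n))) :=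
  (myA μ n nbr).image (fun p => s(p.1, p.2))

lemma myA_lt (μ n : ℕ) (nbr : Fin (2 * μ + n) → Finset (Fin (2 * μ + n)))
    (hnbr : ∀ v : Fin (2 * μ + n), 2 * μ ≤ v.val → ∀ u ∈ nbr v, u.val < v.val) :
    ∀ p ∈ myA μ n nbr, p.1.val < p.2.val := by
  intro p hp
  simp only [myA, Finset.mem_union, Finset.mem_filter] at hp
  rcases hp with ⟨_, h, _⟩ | ⟨_, h1, h2⟩
  · exact h
  · exact hnbr p.2 h2 p.1 h1

lemma myA_injOn (μ n : ℕ) (nbr : Fin (2 * μ + n) → Finset (Fin (2 * μ + n)))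
    (hnbr : ∀ v : Fin (2 * μ + n), 2 * μ ≤ v.val → ∀ u ∈ nbr v, u.val < v.val) :
    Set.InjOn (fun p : Fin (2 * μ + n) × Fin (2 * μ + n) => s(p.1, p.2)) (myA μ n nbr) := by
  intro p hp q hq h
  have hp' := myA_lt μ n nbr hnbr p hp
  have hq' := myA_lt μ n nbr hnbr q hq
  simp only [Sym2.eq_iff] at h
  rcases h with ⟨h1, h2⟩ | ⟨h1, h2⟩
  · exact Prod.ext h1 h2
  · rw [h1, h2] at hp'; omega

lemma card_filter_eq (μ n : ℕ) (nbr : Fin (2 * μ + n) → Finset (Fin (2 * μ + n)))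
    (hnbr : ∀ v : Fin (2 * μ + n), 2 * μ ≤ v.val → ∀ u ∈ nbr v, u.val < v.val)
    (S : Finset (Fin (2 * μ + n))) :
    ((evolvingEdges' μ n nbr).filter (fun e => ∀ v ∈ e, v ∈ S)).card
      = ((myA μ n nbr).filter (fun p => p.1 ∈ S ∧ p.2 ∈ S)).card := by
  rw [evolvingEdges', Finset.filter_image]
  rw [Finset.card_image_of_injOn ((myA_injOn μ n nbr hnbr).mono (Finset.filter_subset _ _))]
  congr 1
  apply Finset.filter_congr
  intro p _
  constructor
  · intro h
    exact ⟨h p.1 (Sym2.mem_mk_left _ _), h p.2 (Sym2.mem_mk_right _ _)⟩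
  · intro h v hv
    rcases Sym2.mem_iff.mp hv with h1 | h1 <;> subst h1
    · exact h.1
    · exact h.2

lemma decomp (μ n : ℕ) (nbr : Fin (2 * μ + n) → Finset (Fin (2 * μ + n)))
    (hnbr : ∀ v : Fin (2 * μ + n), 2 * μ ≤ v.val → ∀ u ∈ nbr v, u.val < v.val)
    (S : Finset (Fin (2 * μ + n))) (hS : S.Nonempty) :
    ((myA μ n nbr).filter (fun p => p.1 ∈ S ∧ p.2 ∈ S)).card ≤
      ((myA μ n nbr).filter
        (fun p => p.1 ∈ S.erase (S.max' hS) ∧ p.2 ∈ S.erase (S.max' hS))).card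
      + ((myA μ n nbr).filter (fun p => p.1 ∈ S ∧ p.2 = S.max' hS)).card := by
  set v := S.max' hS with hv
  calc ((myA μ n nbr).filter (fun p => p.1 ∈ S ∧ p.2 ∈ S)).card
      ≤ (((myA μ n nbr).filter
            (fun p => p.1 ∈ S.erase v ∧ p.2 ∈ S.erase v))
          ∪ ((myA μ n nbr).filter (fun p => p.1 ∈ S ∧ p.2 = v))).card := by
        apply Finset.card_le_card
        intro p hp
        rw [Finset.mem_filter] at hp
        obtain ⟨hpA, hp1, hp2⟩ := hp
        have hlt := myA_lt μ n nbr hnbr p hpA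
        rw [Finset.mem_union, Finset.mem_filter, Finset.mem_filter]
        by_cases h2v : p.2 = v
        · exact Or.inr ⟨hpA, hp1, h2v⟩
        · left
          have h2le : p.2 ≤ v := S.le_max' _ hp2
          have h2lt : p.2.val < v.val := lt_of_le_of_ne (Fin.le_def.mp h2le)
            (fun h => h2v (Fin.ext h))
          refine ⟨hpA, Finset.mem_erase.mpr ⟨?_, hp1⟩, Finset.mem_erase.mpr ⟨h2v, hp2⟩⟩
          intro h; rw [h] at hlt; omega
    _ ≤ _ := Finset.card_union_le _ _

lemma fib_le_erase (μ n : ℕ) (nbr : Fin (2 * μ + n) → Finset (Fin (2 * μ + n)))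
    (hnbr : ∀ v : Fin (2 * μ + n), 2 * μ ≤ v.val → ∀ u ∈ nbr v, u.val < v.val)
    (S : Finset (Fin (2 * μ + n))) (v : Fin (2 * μ + n)) :
    ((myA μ n nbr).filter (fun p => p.1 ∈ S ∧ p.2 = v)).card ≤ (S.erase v).card := by
  apply Finset.card_le_card_of_injOn Prod.fst
  · intro p hp
    rw [Finset.mem_coe, Finset.mem_filter] at hp
    obtain ⟨hpA, hp1, hp2⟩ := hp
    have hlt := myA_lt μ n nbr hnbr p hpA
    refine Finset.mem_erase.mpr ⟨?_, hp1⟩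
    intro h; rw [h, hp2] at hlt; omega
  · intro p hp q hq h
    rw [Finset.mem_coe, Finset.mem_filter] at hp hq
    exact Prod.ext h (hp.2.2.trans hq.2.2.symm)

lemma fib_le_mu (μ n : ℕ) (nbr : Fin (2 * μ + n) → Finset (Fin (2 * μ + n)))
    (hcard : ∀ v : Fin (2 * μ + n), 2 * μ ≤ v.val → (nbr v).card = μ)
    (S : Finset (Fin (2 * μ + n))) (v : Fin (2 * μ + n)) (hv : 2 * μ ≤ v.val) :
    ((myA μ n nbr).filter (fun p => p.1 ∈ S ∧ p.2 = v)).card ≤ μ := by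
  have h : ((myA μ n nbr).filter (fun p => p.1 ∈ S ∧ p.2 = v)).card ≤ (nbr v).card := by
    apply Finset.card_le_card_of_injOn Prod.fst
    · intro p hp
      rw [Finset.mem_coe, Finset.mem_filter] at hp
      obtain ⟨hpA, hp1, hp2⟩ := hp
      simp only [myA, Finset.mem_union, Finset.mem_filter] at hpA
      rcases hpA with ⟨_, _, h⟩ | ⟨_, h1, _⟩
      · rw [hp2] at h; omega
      · rw [hp2] at h1; exact h1
    · intro p hp q hq h
      rw [Finset.mem_coe, Finset.mem_filter] at hp hq
      exact Prod.ext h (hp.2.2.trans hq.2.2.symm)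
  exact le_trans h (le_of_eq (hcard v hv))

lemma clique_bound (μ n : ℕ) (nbr : Fin (2 * μ + n) → Finset (Fin (2 * μ + n)))
    (hnbr : ∀ v : Fin (2 * μ + n), 2 * μ ≤ v.val → ∀ u ∈ nbr v, u.val < v.val)
    (S : Finset (Fin (2 * μ + n))) :
    2 * ((myA μ n nbr).filter (fun p => p.1 ∈ S ∧ p.2 ∈ S)).card
      ≤ S.card * (S.card - 1) := by
  induction S using Finset.strongInductionOn with
  | _ S ih =>
    rcases S.eq_empty_or_nonempty with rfl | hS
    · simp
    · set v := S.max' hS with hv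
      have hvS : v ∈ S := S.max'_mem hS
      have hsub : S.erase v ⊂ S := Finset.erase_ssubset hvS
      have h1 := decomp μ n nbr hnbr S hS
      rw [← hv] at h1
      have h2 := fib_le_erase μ n nbr hnbr S v
      have h3 := ih (S.erase v) hsub
      have hce : (S.erase v).card = S.card - 1 := Finset.card_erase_of_mem hvS
      obtain ⟨k, hk⟩ : ∃ k, S.card = k + 1 :=
        ⟨S.card - 1, (Nat.succ_pred_eq_of_pos (Finset.card_pos.mpr hS)).symm⟩
      rw [hce] at h2 h3
      rw [hk] at h2 h3 ⊢
      simp only [Nat.add_sub_cancel] at h2 h3 ⊢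
      cases k with
      | zero =>
        have he : S.erase v = ∅ := Finset.card_eq_zero.mp (by rw [hce, hk])
        rw [he] at h1
        simp only [Finset.notMem_empty, false_and, Finset.filter_false,
          Finset.card_empty, zero_add] at h1
        simp only [Nat.zero_add] at h2 ⊢
        omega
      | succ m =>
        simp only [Nat.add_sub_cancel] at h3
        nlinarith

lemma key_bound (μ n : ℕ) (hμ : 1 ≤ μ) (nbr : Fin (2 * μ + n) → Finset (Fin (2 * μ + n)))
    (hnbr : ∀ v : Fin (2 * μ + n), 2 * μ ≤ v.val →
      (nbr v).card = μ ∧ ∀ u ∈ nbr v, u.val < v.val)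
    (S : Finset (Fin (2 * μ + n))) (hS : S.Nonempty) :
    ((myA μ n nbr).filter (fun p => p.1 ∈ S ∧ p.2 ∈ S)).card + μ ≤ μ * S.card := by
  have hnbr' : ∀ v : Fin (2 * μ + n), 2 * μ ≤ v.val → ∀ u ∈ nbr v, u.val < v.val :=
    fun v hv => (hnbr v hv).2
  have hcard : ∀ v : Fin (2 * μ + n), 2 * μ ≤ v.val → (nbr v).card = μ :=
    fun v hv => (hnbr v hv).1
  induction S using Finset.strongInductionOn with
  | _ S ih =>
    set v := S.max' hS with hv
    have hvS : v ∈ S := S.max'_mem hS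
    by_cases hvlt : v.val < 2 * μ
    · -- clique case: all of S has val < 2μ
      have hc := clique_bound μ n nbr hnbr' S
      have hs2 : S.card ≤ 2 * μ := by
        have : S.card ≤ (Finset.range (2 * μ)).card := by
          apply Finset.card_le_card_of_injOn Fin.val
          · intro a ha
            rw [Finset.mem_coe, Finset.mem_range]
            have : a ≤ v := S.le_max' _ ha
            omega
          · exact fun a _ b _ h => Fin.ext h
        simpa using this
      obtain ⟨k, hk⟩ : ∃ k, S.card = k + 1 :=
        ⟨S.card - 1, (Nat.succ_pred_eq_of_pos (Finset.card_pos.mpr hS)).symm⟩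
      rw [hk] at hc hs2 ⊢
      simp only [Nat.add_sub_cancel] at hc
      nlinarith
    · push_neg at hvlt
      have h1 := decomp μ n nbr hnbr' S hS
      rw [← hv] at h1
      have h2 := fib_le_mu μ n nbr hcard S v hvlt
      rcases (S.erase v).eq_empty_or_nonempty with he | hne
      · have hS1 : S.card = 1 := by
          have := Finset.card_erase_of_mem hvS
          rw [he] at this
          simp at this
          have := Finset.card_pos.mpr hS
          omega
        obtain ⟨a, ha⟩ := Finset.card_eq_one.mp hS1
        have hva : v = a := by rw [ha] at hvS; exact Finset.mem_singleton.mp hvS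
        have hF : (myA μ n nbr).filter (fun p => p.1 ∈ S ∧ p.2 ∈ S) = ∅ := by
          rw [Finset.filter_eq_empty_iff]
          intro p hp hpc
          have hlt := myA_lt μ n nbr hnbr' p hp
          rw [ha] at hpc
          rw [Finset.mem_singleton.mp hpc.1, Finset.mem_singleton.mp hpc.2] at hlt
          omega
        rw [hF, hS1]
        simp
      · have h3 := ih (S.erase v) (Finset.erase_ssubset hvS) hne
        have hce : (S.erase v).card = S.card - 1 := Finset.card_erase_of_mem hvS
        obtain ⟨k, hk⟩ : ∃ k, S.card = k + 1 :=
          ⟨S.card - 1, (Nat.succ_pred_eq_of_pos (Finset.card_pos.mpr hS)).symm⟩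
        rw [hce, hk] at h3
        simp only [Nat.add_sub_cancel] at h3
        rw [hk, Nat.mul_succ]
        omega

lemma part1_real (μ n : ℕ) (hμ : 1 ≤ μ) (nbr : Fin (2 * μ + n) → Finset (Fin (2 * μ + n)))
    (hnbr : ∀ v : Fin (2 * μ + n), 2 * μ ≤ v.val →
      (nbr v).card = μ ∧ ∀ u ∈ nbr v, u.val < v.val)
    (J T : ℝ) (hJ : 0 < J) (hT : J * μ < T)
    (S : Finset (Fin (2 * μ + n))) (hS : S.Nonempty) :
    (((evolvingEdges' μ n nbr).filter (fun e => ∀ v ∈ e, v ∈ S)).card : ℝ) * (J / T) + 1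
      ≤ S.card := by
  have hnbr' : ∀ v : Fin (2 * μ + n), 2 * μ ≤ v.val → ∀ u ∈ nbr v, u.val < v.val :=
    fun v hv => (hnbr v hv).2
  rw [card_filter_eq μ n nbr hnbr' S]
  have hkey := key_bound μ n hμ nbr hnbr S hS
  set c := ((myA μ n nbr).filter (fun p => p.1 ∈ S ∧ p.2 ∈ S)).card with hc
  have hμR : (1 : ℝ) ≤ μ := by exact_mod_cast hμ
  have hμ0 : (0 : ℝ) < μ := by linarith
  have hT0 : (0 : ℝ) < T := lt_trans (by nlinarith) hT
  have hkeyR : (c : ℝ) + μ ≤ μ * S.card := by exact_mod_cast hkey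
  have hs1 : (1 : ℝ) ≤ S.card := by
    exact_mod_cast Nat.one_le_iff_ne_zero.mpr (Finset.card_ne_zero_of_mem hS.choose_spec)
  have hJT0 : 0 ≤ J / T := le_of_lt (div_pos hJ hT0)
  have h1 : (c : ℝ) * (J / T) ≤ (μ * ((S.card : ℝ) - 1)) * (J / T) := by
    apply mul_le_mul_of_nonneg_right _ hJT0
    linarith
  have h2 : (μ * ((S.card : ℝ) - 1)) * (J / T) ≤ (S.card : ℝ) - 1 := by
    rw [mul_comm (μ : ℝ) _, mul_assoc]
    nth_rewrite 2 [← mul_one ((S.card : ℝ) - 1)]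
    apply mul_le_mul_of_nonneg_left _ (by linarith)
    rw [← mul_div_assoc, div_le_one hT0]
    linarith [hT]
  linarith

lemma evolvingEdges_eq (μ n : ℕ) (nbr : Fin (2 * μ + n) → Finset (Fin (2 * μ + n))) :
    evolvingEdges' μ n nbr
      = ((Finset.univ.filter
      (fun p : Fin (2 * μ + n) × Fin (2 * μ + n) => p.1.val < p.2.val ∧ p.2.val < 2 * μ)) ∪
    (Finset.univ.filter
      (fun p : Fin (2 * μ + n) × Fin (2 * μ + n) => p.1 ∈ nbr p.2 ∧ 2 * μ ≤ p.2.val))).image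
    (fun p => s(p.1, p.2)) := rfl

lemma numComponents_empty (V : Type*) [Fintype V] :
    numComponents (∅ : Finset (Sym2 V)) = Fintype.card V := by
  unfold numComponents
  rw [Finset.coe_empty, SimpleGraph.fromEdgeSet_empty, ← Nat.card_eq_fintype_card]
  symm
  apply Nat.card_eq_of_bijective (⊥ : SimpleGraph V).connectedComponentMk
  constructor
  · intro a b h
    exact SimpleGraph.reachable_bot.mp (SimpleGraph.ConnectedComponent.exact h)
  · intro K
    exact Quot.exists_rep K

lemma part2_core (μ n : ℕ) (hμ : 1 ≤ μ) (nbr : Fin (2 * μ + n) → Finset (Fin (2 * μ + n)))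
    (hnbr : ∀ v : Fin (2 * μ + n), 2 * μ ≤ v.val →
      (nbr v).card = μ ∧ ∀ u ∈ nbr v, u.val < v.val)
    (J T : ℝ) (hJ : 0 < J) (hT : J * μ < T)
    (E' : Finset (Sym2 (Fin (2 * μ + n)))) (hE'sub : E' ⊆ evolvingEdges' μ n nbr)
    (hE'ne : E'.Nonempty) :
    (numComponents E' : ℝ) + (J / T) * E'.card
      < (Fintype.card (Fin (2 * μ + n)) : ℝ) := by
  have hnbr' : ∀ v : Fin (2 * μ + n), 2 * μ ≤ v.val → ∀ u ∈ nbr v, u.val < v.val :=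
    fun v hv => (hnbr v hv).2
  set G := SimpleGraph.fromEdgeSet (E' : Set (Sym2 (Fin (2 * μ + n)))) with hG
  haveI : Fintype G.ConnectedComponent := Fintype.ofFinite _
  have hnc : numComponents E' = Fintype.card G.ConnectedComponent := by
    unfold numComponents
    rw [← hG, Nat.card_eq_fintype_card]
  -- every two endpoints of an edge of E' lie in the same component
  have hadj : ∀ e ∈ E', ∀ u ∈ e, ∀ w ∈ e,
      G.connectedComponentMk u = G.connectedComponentMk w := by
    intro e he u hu w hw
    by_cases huw : u = w
    · rw [huw]
    · apply SimpleGraph.ConnectedComponent.connectedComponentMk_eq_of_adj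
      rw [hG, SimpleGraph.fromEdgeSet_adj]
      refine ⟨?_, huw⟩
      rw [← (Sym2.mem_and_mem_iff huw).mp ⟨hu, hw⟩]
      exact he
  -- vertex count as a sum of component sizes
  have hN : Fintype.card (Fin (2 * μ + n)) = ∑ K : G.ConnectedComponent,
      (Finset.univ.filter (fun w => G.connectedComponentMk w = K)).card := by
    rw [← Finset.card_univ]
    exact Finset.card_eq_sum_card_fiberwise (fun v _ => Finset.mem_univ _)
  -- edge count as a sum over components
  have hEcard : E'.card = ∑ K : G.ConnectedComponent,
      (E'.filter (fun e => G.connectedComponentMk e.out.1 = K)).card :=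
    Finset.card_eq_sum_card_fiberwise (fun e _ => Finset.mem_univ _)
  -- each fiber is nonempty
  have hfib_ne : ∀ K : G.ConnectedComponent,
      1 ≤ (Finset.univ.filter (fun w => G.connectedComponentMk w = K)).card := by
    intro K
    obtain ⟨w, hw⟩ := Quot.exists_rep K
    refine Finset.card_pos.mpr ⟨w, ?_⟩
    rw [Finset.mem_filter]
    exact ⟨Finset.mem_univ _, hw⟩
  -- per-component edge bound
  have h5 : ∀ K : G.ConnectedComponent,
      (E'.filter (fun e => G.connectedComponentMk e.out.1 = K)).card + μ
        ≤ μ * (Finset.univ.filter (fun w => G.connectedComponentMk w = K)).card := by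
    intro K
    set SK := Finset.univ.filter (fun w => G.connectedComponentMk w = K) with hSK
    have hsub : E'.filter (fun e => G.connectedComponentMk e.out.1 = K)
        ⊆ (evolvingEdges' μ n nbr).filter (fun e => ∀ v ∈ e, v ∈ SK) := by
      intro e he
      rw [Finset.mem_filter] at he ⊢
      refine ⟨hE'sub he.1, fun v hv => ?_⟩
      rw [hSK, Finset.mem_filter]
      refine ⟨Finset.mem_univ _, ?_⟩
      rw [hadj e he.1 v hv e.out.1 (Sym2.out_fst_mem e)]
      exact he.2
    have hSKne : SK.Nonempty := Finset.card_pos.mp (hfib_ne K)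
    calc (E'.filter (fun e => G.connectedComponentMk e.out.1 = K)).card + μ
        ≤ ((evolvingEdges' μ n nbr).filter (fun e => ∀ v ∈ e, v ∈ SK)).card + μ := by
          exact Nat.add_le_add_right (Finset.card_le_card hsub) μ
      _ = ((myA μ n nbr).filter (fun p => p.1 ∈ SK ∧ p.2 ∈ SK)).card + μ := by
          rw [card_filter_eq μ n nbr hnbr' SK]
      _ ≤ μ * SK.card := key_bound μ n hμ nbr hnbr SK hSKne
  -- summed bound
  have hsum : E'.card + μ * Fintype.card G.ConnectedComponent
      ≤ μ * Fintype.card (Fin (2 * μ + n)) := by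
    rw [hEcard, hN, Finset.mul_sum]
    have := Finset.sum_le_sum (fun K (_ : K ∈ (Finset.univ : Finset G.ConnectedComponent))
      => h5 K)
    rw [Finset.sum_add_distrib, Finset.sum_const, Finset.card_univ, smul_eq_mul] at this
    calc _ = ∑ K : G.ConnectedComponent,
          (E'.filter (fun e => G.connectedComponentMk e.out.1 = K)).card
          + Fintype.card G.ConnectedComponent * μ := by ring
      _ ≤ _ := this
  -- strict inequality on component count
  have hcN : Fintype.card G.ConnectedComponent + 1 ≤ Fintype.card (Fin (2 * μ + n)) := by
    rw [hN]
    have hcards : (Finset.univ : Finset G.ConnectedComponent).card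
        = ∑ K : G.ConnectedComponent, 1 := by simp
    rw [← Finset.card_univ, hcards]
    have hlt : ∑ K : G.ConnectedComponent, 1 < ∑ K : G.ConnectedComponent,
        (Finset.univ.filter (fun w => G.connectedComponentMk w = K)).card := by
      apply Finset.sum_lt_sum (fun K _ => hfib_ne K)
      obtain ⟨e, he⟩ := hE'ne
      have heE : e ∈ evolvingEdges' μ n nbr := hE'sub he
      rw [evolvingEdges', Finset.mem_image] at heE
      obtain ⟨p, hp, hpe⟩ := heE
      have hlt' := myA_lt μ n nbr hnbr' p hp
      have hne : p.1 ≠ p.2 := fun h => by rw [h] at hlt'; omega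
      refine ⟨G.connectedComponentMk p.1, Finset.mem_univ _, ?_⟩
      apply Finset.one_lt_card.mpr
      refine ⟨p.1, ?_, p.2, ?_, hne⟩
      · rw [Finset.mem_filter]
        exact ⟨Finset.mem_univ _, rfl⟩
      · rw [Finset.mem_filter]
        refine ⟨Finset.mem_univ _, ?_⟩
        apply hadj e he
        · rw [← hpe]; exact Sym2.mem_mk_right _ _
        · rw [← hpe]; exact Sym2.mem_mk_left _ _
    omega
  -- real arithmetic
  have hμR : (1 : ℝ) ≤ μ := by exact_mod_cast hμ
  have hμ0 : (0 : ℝ) < μ := by linarith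
  have hT0 : (0 : ℝ) < T := lt_trans (by nlinarith) hT
  have hE1 : (1 : ℝ) ≤ E'.card := by
    exact_mod_cast Nat.one_le_iff_ne_zero.mpr (Finset.card_ne_zero_of_mem hE'ne.choose_spec)
  have hsumR : (E'.card : ℝ) + μ * Fintype.card G.ConnectedComponent
      ≤ μ * Fintype.card (Fin (2 * μ + n)) := by exact_mod_cast hsum
  have hcNR : (Fintype.card G.ConnectedComponent : ℝ) + 1
      ≤ Fintype.card (Fin (2 * μ + n)) := by exact_mod_cast hcN
  rw [hnc]
  have h1 : J / T < 1 / μ := by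
    rw [div_lt_div_iff₀ hT0 hμ0]
    linarith
  have h2 : (J / T) * E'.card < (1 / μ) * E'.card := by
    apply mul_lt_mul_of_pos_right h1
    linarith
  have h3 : (1 / μ) * E'.card ≤ (Fintype.card (Fin (2 * μ + n)) : ℝ)
      - Fintype.card G.ConnectedComponent := by
    rw [one_div, inv_mul_le_iff₀ hμ0]
    nlinarith
  linarith

/-- On an evolving network built from the complete graph `K_{2μ}` by attaching each new vertex
with exactly `μ` edges to earlier vertices, if `T > Jμ` then for every nonempty vertex subset `S`
with `n_s` vertices and `e_s` internal edges one has `n_s ≥ e_s·J/T + 1`, and the only optimal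
set of `φ(E') = c(E') + (J/T)|E'|` is the empty edge set. -/
theorem evolving_network_high_temperature_optimal_set_empty
    (μ n : ℕ) (hμ : 1 ≤ μ)
    (nbr : Fin (2 * μ + n) → Finset (Fin (2 * μ + n)))
    (hnbr : ∀ v : Fin (2 * μ + n), 2 * μ ≤ v.val →
      (nbr v).card = μ ∧ ∀ u ∈ nbr v, u.val < v.val)
    (J T : ℝ) (hJ : 0 < J) (hT : J * μ < T) :
    (∀ S : Finset (Fin (2 * μ + n)), S.Nonempty →
      (((evolvingEdges μ n nbr).filter (fun e => ∀ v ∈ e, v ∈ S)).card : ℝ) * (J / T) + 1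
        ≤ S.card) ∧
    ∀ E' ∈ (evolvingEdges μ n nbr).powerset,
      (∀ E'' ∈ (evolvingEdges μ n nbr).powerset,
        (numComponents E'' : ℝ) + (J / T) * E''.card
          ≤ (numComponents E' : ℝ) + (J / T) * E'.card) →
      E' = ∅ := by
  have hee : evolvingEdges μ n nbr = evolvingEdges' μ n nbr := rfl
  constructor
  · intro S hS
    rw [hee]
    exact part1_real μ n hμ nbr hnbr J T hJ hT S hS
  · intro E' hE' hopt
    by_contra hne
    have hEne : E'.Nonempty := Finset.nonempty_iff_ne_empty.mpr hne
    have hsub : E' ⊆ evolvingEdges' μ n nbr := by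
      rw [← hee]; exact Finset.mem_powerset.mp hE'
    have hcore := part2_core μ n hμ nbr hnbr J T hJ hT E' hsub hEne
    have hopt0 := hopt ∅ (Finset.empty_mem_powerset _)
    rw [numComponents_empty] at hopt0
    simp only [Finset.card_empty, Nat.cast_zero, mul_zero, add_zero] at hopt0
    rw [Fintype.card_fin] at hcore hopt0
    linarith
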